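/- arXiv:1604.06618 — 3 statements merged into one kernel-verified Lean document; each statement's English description precedes it below -/
import Mathlib

section
/- If Q is an (N+1)×(N+1) real matrix whose rows each sum to zero, then for any vectors a, b ∈ ℝ^{N+1}, 2·∑_{m=0}^{N} Q_{im}·((a_i+a_m)/2)·((b_i+b_m)/2) = (1/2)·( ∑_{m=0}^{N} Q_{im}·a_m·b_m + a_i·∑_{m=0}^{N} Q_{im}·b_m + b_i·∑_{m=0}^{N} Q_{im}·a_m ) for every i. That is, the two-point arithmetic-mean product volume flux generates the quadratic split form (a b)_x = ½(a b)_x + ½(a_x b + a b_x) discretely. -/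
theorem split_form_quadratic (N : ℕ) (Q : Matrix (Fin (N+1)) (Fin (N+1)) ℝ)
    (hQ : ∀ i, ∑ m, Q i m = 0) (a b : Fin (N+1) → ℝ) (i : Fin (N+1)) :
    2 * ∑ m, Q i m * ((a i + a m) / 2) * ((b i + b m) / 2) =
      (1/2) * ((∑ m, Q i m * a m * b m) + a i * (∑ m, Q i m * b m)
        + b i * (∑ m, Q i m * a m)) := by
  have h := hQ i
  have key : ∀ m, Q i m * ((a i + a m) / 2) * ((b i + b m) / 2)
      = (1/4) * (Q i m * (a i * b i)) + (1/4) * (Q i m * (a i * b m))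
        + (1/4) * (Q i m * (a m * b i)) + (1/4) * (Q i m * (a m * b m)) := by
    intro m; ring
  rw [Finset.sum_congr rfl fun m _ => key m]
  simp only [Finset.sum_add_distrib, ← Finset.mul_sum, ← Finset.sum_mul]
  rw [h, zero_mul]
  rw [show (∑ m, Q i m * (a i * b m)) = a i * ∑ m, Q i m * b m by
    rw [Finset.mul_sum]; exact Finset.sum_congr rfl fun m _ => by ring,
    show (∑ m, Q i m * (a m * b i)) = b i * ∑ m, Q i m * a m by
    rw [Finset.mul_sum]; exact Finset.sum_congr rfl fun m _ => by ring,
    show (∑ m, Q i m * (a m * b m)) = ∑ m, Q i m * a m * b m by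
    exact Finset.sum_congr rfl fun m _ => by ring]
  ring
end

section
/- If Q is an (N+1)×(N+1) real matrix whose rows each sum to zero, then for any vectors a, b, c ∈ ℝ^{N+1}, 2·∑_{m=0}^{N} Q_{im}·((a_i+a_m)/2)·((b_i+b_m)/2)·((c_i+c_m)/2) = (1/4)·( ∑_m Q_{im} a_m b_m c_m + a_i ∑_m Q_{im} b_m c_m + b_i ∑_m Q_{im} a_m c_m + c_i ∑_m Q_{im} a_m b_m + b_i c_i ∑_m Q_{im} a_m + a_i c_i ∑_m Q_{im} b_m + a_i b_i ∑_m Q_{im} c_m ) for every i. That is, the triple arithmetic-mean product volume flux generates the Kennedy–Gruber cubic split form discretely. -/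
theorem split_form_cubic (N : ℕ) (Q : Matrix (Fin (N+1)) (Fin (N+1)) ℝ)
    (hQ : ∀ i, ∑ m, Q i m = 0) (a b c : Fin (N+1) → ℝ) (i : Fin (N+1)) :
    2 * ∑ m, Q i m * ((a i + a m) / 2) * ((b i + b m) / 2) * ((c i + c m) / 2) =
      (1/4) * ((∑ m, Q i m * a m * b m * c m)
        + a i * (∑ m, Q i m * b m * c m)
        + b i * (∑ m, Q i m * a m * c m)
        + c i * (∑ m, Q i m * a m * b m)
        + b i * c i * (∑ m, Q i m * a m)
        + a i * c i * (∑ m, Q i m * b m)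
        + a i * b i * (∑ m, Q i m * c m)) := by
  have h := hQ i
  have expand : (2:ℝ) * ∑ m, Q i m * ((a i + a m)/2) * ((b i + b m)/2) * ((c i + c m)/2)
      = (1/4) * ((∑ m, Q i m * a m * b m * c m) + a i * (∑ m, Q i m * b m * c m)
        + b i * (∑ m, Q i m * a m * c m) + c i * (∑ m, Q i m * a m * b m)
        + b i * c i * (∑ m, Q i m * a m) + a i * c i * (∑ m, Q i m * b m)
        + a i * b i * (∑ m, Q i m * c m) + a i * b i * c i * (∑ m, Q i m)) := by
    simp only [Finset.mul_sum, ← Finset.sum_add_distrib]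
    apply Finset.sum_congr rfl
    intros
    ring
  rw [expand, h]
  ring
end

section
/- Let D satisfy the SBP property (Q = M·D, Q + Qᵀ = B = diag(−1,0,...,0,1), M = diag(ω) with ω_i > 0) and suppose the two-point numerical volume flux for the momentum equations has the Jameson structure F^{#,2} = F^{#,1}⟨u⟩ + p̃, F^{#,3} = F^{#,1}⟨v⟩, F^{#,4} = F^{#,1}⟨w⟩, with p̃ symmetric and consistent. Then the discrete kinetic-energy time derivative at node i, defined by (κ_t)_i = −((u_i²+v_i²+w_i²)/2)(ρ_t)_i + u_i(ρu)_t,i + v_i(ρv)_t,i + w_i(ρw)_t,i with the flux-differencing volume terms, equals −2∑_m D_{im}·f^{#,κ}(U_i,U_m) − 2u_i∑_m D_{im} p̃(U_i,U_m), where f^{#,κ}(U_i,U_m) = ½F^{#,1}(U_i,U_m)(u_i u_m + v_i v_m + w_i w_m) is a symmetric, consistent two-point flux for the kinetic energy (stated in one space dimension with velocity components u,v,w). -/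
theorem discrete_kinetic_energy_preservation (N : ℕ)
    (ω : Fin (N+1) → ℝ) (hω : ∀ i, 0 < ω i)
    (D Q : Matrix (Fin (N+1)) (Fin (N+1)) ℝ)
    (hQdef : Q = Matrix.diagonal ω * D)
    (hSBP : Q + Q.transpose =
      Matrix.diagonal (fun i => if i = (0 : Fin (N+1)) then (-1 : ℝ)
        else if i = Fin.last N then 1 else 0))
    -- nodal primitive values and two-point fluxes
    (ρ u v w p : Fin (N+1) → ℝ)
    (F1 ptilde : Fin (N+1) → Fin (N+1) → ℝ)
    (hF1sym : ∀ i m, F1 i m = F1 m i)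
    (hpsym : ∀ i m, ptilde i m = ptilde m i)
    (hpcons : ∀ i, ptilde i i = p i)
    -- flux-differencing time derivatives with the Jameson flux structure
    (ρt ρut ρvt ρwt : Fin (N+1) → ℝ)
    (hρt : ∀ i, ρt i = -2 * ∑ m, D i m * F1 i m)
    (hρut : ∀ i, ρut i = -2 * ∑ m, D i m * (F1 i m * ((u i + u m) / 2) + ptilde i m))
    (hρvt : ∀ i, ρvt i = -2 * ∑ m, D i m * (F1 i m * ((v i + v m) / 2)))
    (hρwt : ∀ i, ρwt i = -2 * ∑ m, D i m * (F1 i m * ((w i + w m) / 2)))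
    -- the two-point kinetic energy flux
    (fκ : Fin (N+1) → Fin (N+1) → ℝ)
    (hfκ : ∀ i m, fκ i m = (1/2) * F1 i m * (u i * u m + v i * v m + w i * w m)) :
    -- fκ is symmetric and consistent, and the discrete kinetic-energy time
    -- derivative has flux-differencing form plus the pressure work
    (∀ i m, fκ i m = fκ m i) ∧
    (∀ i, fκ i i = F1 i i * (u i ^ 2 + v i ^ 2 + w i ^ 2) / 2) ∧
    (∀ i, -((u i ^ 2 + v i ^ 2 + w i ^ 2) / 2) * ρt i
        + u i * ρut i + v i * ρvt i + w i * ρwt i =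
      -2 * (∑ m, D i m * fκ i m) - 2 * u i * ∑ m, D i m * ptilde i m) := by
  refine ⟨fun i m => by rw [hfκ, hfκ, hF1sym i m]; ring,
          fun i => by rw [hfκ]; ring, fun i => ?_⟩
  simp only [hρt, hρut, hρvt, hρwt, hfκ, Finset.mul_sum, ← Finset.sum_add_distrib,
    ← Finset.sum_sub_distrib]
  apply Finset.sum_congr rfl
  intro m _
  ring
end
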